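/- Let p, q, u, v be pairwise coprime positive integers, N = pquv, r₁ = pu, s₁ = qv, r₂ = pv, s₂ = qu, and let σ_{1/r₁}, σ_{1/r₂} ∈ SL₂(ℝ) be the Atkin–Lehner scaling matrices of 1/r₁ and 1/r₂. Let χ be an even Dirichlet character modulo N factored as χ = χ_p χ_q χ_u χ_v, where χ_p, χ_q, χ_u, χ_v are Dirichlet characters modulo p, q, u, v respectively. Let m, n be integers, let c be a positive integer with pq ∣ c and gcd(c, uv) = 1, and set γ₀ = c·√(uv). Let D be the set of elements M of σ_{1/r₁}⁻¹ · Γ₀(N) · σ_{1/r₂} with M₂₁ = γ₀, M₁₁ ∈ [0, γ₀) and M₂₂ ∈ [0, γ₀); for M ∈ D the matrix σ_{1/r₁} M σ_{1/r₂}⁻¹ lies in Γ₀(N) and has an integer lower-right entry d_M. Then ∑_{M ∈ D} conj(χ(d_M)) · e((M₁₁·m + M₂₂·n)/γ₀) = 𝔣 · conj(χ_u(c)) · χ_v(c) · ∑_{a,d mod c, ad ≡ 1 (mod c)} conj(χ_p(d)) · conj(χ_q(a)) · e((a·t·m + d·n)/c), where t is any integer with t·uv ≡ 1 (mod c), and 𝔣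 = χ_v(−1) · conj(χ_p(u)) · conj(χ_v(u)) · χ_q(v) · χ_u(v) · χ_u(pq) · conj(χ_v(pq)). -/

import Mathlib

open Matrix

/-- `e x = exp(2πix)`. -/
noncomputable def eFun (x : ℝ) : ℂ := Complex.exp (2 * Real.pi * Complex.I * x)


lemma eFun_add (x y : ℝ) : eFun (x + y) = eFun x * eFun y := by
  simp [eFun, mul_add, Complex.exp_add]

lemma eFun_int (k : ℤ) : eFun k = 1 := by
  simp only [eFun]
  have : (2 * Real.pi * Complex.I * (k:ℝ) : ℂ) = (k : ℤ) * (2 * Real.pi * Complex.I) := by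
    push_cast; ring
  rw [this, Complex.exp_int_mul_two_pi_mul_I]

lemma char_conj_mul {N : ℕ} (hN : N ≠ 0) (ψ : DirichletCharacter ℂ N) (x : ZMod N)
    (hx : IsUnit x) : (starRingEnd ℂ) (ψ x) * ψ x = 1 := by
  haveI : NeZero N := ⟨hN⟩
  have hord : x ^ (Fintype.card (ZMod N)ˣ) = 1 := by
    have h2 := pow_card_eq_one (G := (ZMod N)ˣ) (x := hx.unit)
    calc x ^ (Fintype.card (ZMod N)ˣ) = ((hx.unit : ZMod N)) ^ (Fintype.card (ZMod N)ˣ) := by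
          rw [hx.unit_spec]
      _ = ((hx.unit ^ (Fintype.card (ZMod N)ˣ) : (ZMod N)ˣ) : ZMod N) := by push_cast; rfl
      _ = 1 := by rw [h2]; rfl
  have hpow : (ψ x) ^ (Fintype.card (ZMod N)ˣ) = 1 := by
    rw [← map_pow, hord, ψ.map_one]
  have hcard : (Fintype.card (ZMod N)ˣ) ≠ 0 := Fintype.card_ne_zero
  have hnorm : ‖ψ x‖ = 1 := Complex.norm_eq_one_of_pow_eq_one hpow hcard
  have h3 : (starRingEnd ℂ) (ψ x) * ψ x = (Complex.normSq (ψ x) : ℂ) := by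
    rw [mul_comm, Complex.mul_conj]
  rw [h3, Complex.normSq_eq_norm_sq, hnorm]
  norm_num

set_option maxHeartbeats 1000000 in
theorem stmt_4 (p q u v : ℕ) (hp : 0 < p) (hq : 0 < q) (hu : 0 < u) (hv : 0 < v)
    (hpq : Nat.Coprime p q) (hpu : Nat.Coprime p u) (hpv : Nat.Coprime p v)
    (hqu : Nat.Coprime q u) (hqv : Nat.Coprime q v) (huv : Nat.Coprime u v)
    (χ : DirichletCharacter ℂ (p * q * u * v))
    (χp : DirichletCharacter ℂ p) (χq : DirichletCharacter ℂ q)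
    (χu : DirichletCharacter ℂ u) (χv : DirichletCharacter ℂ v)
    (hχeven : χ (-1) = 1)
    (hfact : ∀ x : ℤ, χ ((x : ℤ) : ZMod (p * q * u * v)) =
      χp ((x : ℤ) : ZMod p) * χq ((x : ℤ) : ZMod q) * χu ((x : ℤ) : ZMod u) *
        χv ((x : ℤ) : ZMod v))
    (sbar₁ sbar₂ b₁ b₂ : ℤ)
    (h₁ : sbar₁ * ((q * v : ℕ) : ℤ) - 1 = ((p * u : ℕ) : ℤ) * b₁)
    (h₂ : sbar₂ * ((q * u : ℕ) : ℤ) - 1 = ((p * v : ℕ) : ℤ) * b₂)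
    (σ₁ σ₂ : Matrix (Fin 2) (Fin 2) ℝ)
    (hσ₁ : σ₁ = !![(1 : ℝ), (b₁ : ℝ); ((p * u : ℕ) : ℝ), ((sbar₁ * ((q * v : ℕ) : ℤ) : ℤ) : ℝ)] *
      !![Real.sqrt ((q * v : ℕ) : ℝ), 0; 0, (Real.sqrt ((q * v : ℕ) : ℝ))⁻¹])
    (hσ₂ : σ₂ = !![(1 : ℝ), (b₂ : ℝ); ((p * v : ℕ) : ℝ), ((sbar₂ * ((q * u : ℕ) : ℤ) : ℤ) : ℝ)] *
      !![Real.sqrt ((q * u : ℕ) : ℝ), 0; 0, (Real.sqrt ((q * u : ℕ) : ℝ))⁻¹])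
    (m n : ℤ) (c : ℕ) (hc : 0 < c) (hpqc : p * q ∣ c) (hcuv : Nat.Coprime c (u * v))
    (γ₀ : ℝ) (hγ₀ : γ₀ = (c : ℝ) * Real.sqrt ((u * v : ℕ) : ℝ))
    (D : Set (Matrix (Fin 2) (Fin 2) ℝ))
    (hD : D = {M | (∃ g : Matrix (Fin 2) (Fin 2) ℤ, g.det = 1 ∧
        ((p * q * u * v : ℕ) : ℤ) ∣ g 1 0 ∧ M = σ₁⁻¹ * g.map (Int.cast : ℤ → ℝ) * σ₂) ∧
      M 1 0 = γ₀ ∧ M 0 0 ∈ Set.Ico 0 γ₀ ∧ M 1 1 ∈ Set.Ico 0 γ₀})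
    (t : ℤ) (ht : t * ((u * v : ℕ) : ℤ) ≡ 1 [ZMOD (c : ℤ)])
    (frak : ℂ)
    (hfrak : frak = χv (-1) * (starRingEnd ℂ) (χp (u : ZMod p)) *
      (starRingEnd ℂ) (χv (u : ZMod v)) * χq (v : ZMod q) * χu (v : ZMod u) *
      χu ((p * q : ℕ) : ZMod u) * (starRingEnd ℂ) (χv ((p * q : ℕ) : ZMod v))) :
    (∀ M ∈ D, ∃ g : Matrix (Fin 2) (Fin 2) ℤ, g.det = 1 ∧
        ((p * q * u * v : ℕ) : ℤ) ∣ g 1 0 ∧ σ₁ * M * σ₂⁻¹ = g.map (Int.cast : ℤ → ℝ)) ∧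
    ∑ᶠ M ∈ D, (starRingEnd ℂ) (χ ((⌊(σ₁ * M * σ₂⁻¹) 1 1⌋ : ℤ) : ZMod (p * q * u * v))) *
        eFun ((M 0 0 * (m : ℝ) + M 1 1 * (n : ℝ)) / γ₀) =
      frak * (starRingEnd ℂ) (χu (c : ZMod u)) * χv (c : ZMod v) *
        ∑ a ∈ (Finset.range c).filter (fun a => Nat.gcd a c = 1),
          (starRingEnd ℂ) (χp ((((a : ZMod c)⁻¹).val : ℕ) : ZMod p)) *
            (starRingEnd ℂ) (χq (a : ZMod q)) *
            eFun ((((a : ℤ) * t * m + ((((a : ZMod c)⁻¹).val : ℕ) : ℤ) * n : ℤ) : ℝ) / (c : ℝ)) := by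
  set W : ℝ := Real.sqrt ((u*v : ℕ) : ℝ) with hW
  set W₁ : ℝ := Real.sqrt ((q*v : ℕ) : ℝ) with hW₁
  set W₂ : ℝ := Real.sqrt ((q*u : ℕ) : ℝ) with hW₂
  have hWpos : 0 < W := Real.sqrt_pos.2 (by positivity)
  have hW₁pos : 0 < W₁ := Real.sqrt_pos.2 (by positivity)
  have hW₂pos : 0 < W₂ := Real.sqrt_pos.2 (by positivity)
  have sqmul : ∀ a b : ℕ, Real.sqrt ((a:ℝ)) * Real.sqrt ((b:ℝ)) = Real.sqrt ((a*b : ℕ) : ℝ) := by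
    intro a b
    rw [← Real.sqrt_mul (by positivity)]; norm_num
  have hW₁₂ : W₁ * W₂ = q * W := by
    rw [hW₁, hW₂, hW, sqmul]
    rw [show ((q*v)*(q*u)) = q^2 * (u*v) by ring, show ((q^2 * (u*v) : ℕ) : ℝ) = (q:ℝ)^2 * ((u*v : ℕ):ℝ) by push_cast; ring]
    rw [Real.sqrt_mul (by positivity), Real.sqrt_sq (by positivity)]
  have hW₁W : W₁ * W = v * W₂ := by
    rw [hW₁, hW₂, hW, sqmul]
    rw [show ((q*v)*(u*v)) = v^2 * (q*u) by ring, show ((v^2 * (q*u) : ℕ) : ℝ) = (v:ℝ)^2 * ((q*u : ℕ):ℝ) by push_cast; ring]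
    rw [Real.sqrt_mul (by positivity), Real.sqrt_sq (by positivity)]
  have hW₂W : W₂ * W = u * W₁ := by
    rw [hW₁, hW₂, hW, sqmul]
    rw [show ((q*u)*(u*v)) = u^2 * (q*v) by ring, show ((u^2 * (q*v) : ℕ) : ℝ) = (u:ℝ)^2 * ((q*v : ℕ):ℝ) by push_cast; ring]
    rw [Real.sqrt_mul (by positivity), Real.sqrt_sq (by positivity)]
  have h₁' : sbar₁ * ((q:ℤ)*(v:ℤ)) - 1 = ((p:ℤ)*(u:ℤ))*b₁ := by push_cast at h₁ ⊢; linarith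
  have h₂' : sbar₂ * ((q:ℤ)*(u:ℤ)) - 1 = ((p:ℤ)*(v:ℤ))*b₂ := by push_cast at h₂ ⊢; linarith
  -- integer tau matrices
  set τ₁ : Matrix (Fin 2) (Fin 2) ℤ := !![1, b₁; ((p*u : ℕ) : ℤ), sbar₁*((q*v:ℕ):ℤ)] with hτ₁
  set τ₁' : Matrix (Fin 2) (Fin 2) ℤ := !![sbar₁*((q*v:ℕ):ℤ), -b₁; -((p*u:ℕ):ℤ), 1] with hτ₁'
  set τ₂ : Matrix (Fin 2) (Fin 2) ℤ := !![1, b₂; ((p*v : ℕ) : ℤ), sbar₂*((q*u:ℕ):ℤ)] with hτ₂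
  set τ₂' : Matrix (Fin 2) (Fin 2) ℤ := !![sbar₂*((q*u:ℕ):ℤ), -b₂; -((p*v:ℕ):ℤ), 1] with hτ₂'
  have hτ₁τ₁' : τ₁ * τ₁' = 1 := by
    rw [hτ₁, hτ₁', Matrix.mul_fin_two, Matrix.one_fin_two]
    ext i j
    fin_cases i <;> fin_cases j <;> simp <;> linarith [h₁']
  have hτ₁'τ₁ : τ₁' * τ₁ = 1 := by
    rw [hτ₁, hτ₁', Matrix.mul_fin_two, Matrix.one_fin_two]
    ext i j
    fin_cases i <;> fin_cases j <;> simp <;> linarith [h₁']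
  have hτ₂τ₂' : τ₂ * τ₂' = 1 := by
    rw [hτ₂, hτ₂', Matrix.mul_fin_two, Matrix.one_fin_two]
    ext i j
    fin_cases i <;> fin_cases j <;> simp <;> linarith [h₂']
  have hτ₂'τ₂ : τ₂' * τ₂ = 1 := by
    rw [hτ₂, hτ₂', Matrix.mul_fin_two, Matrix.one_fin_two]
    ext i j
    fin_cases i <;> fin_cases j <;> simp <;> linarith [h₂']
  -- cast to real
  set cm : Matrix (Fin 2) (Fin 2) ℤ → Matrix (Fin 2) (Fin 2) ℝ :=
    fun g => g.map (Int.cast : ℤ → ℝ) with hcm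
  have cm_mul : ∀ g h : Matrix (Fin 2) (Fin 2) ℤ, cm (g * h) = cm g * cm h := by
    intro g h; exact Matrix.map_mul (f := Int.castRingHom ℝ)
  have cm_one : cm 1 = 1 := by
    rw [hcm]; exact Matrix.map_one _ (Int.cast_zero) (Int.cast_one)
  -- sigma decompositions
  set ν₁ : Matrix (Fin 2) (Fin 2) ℝ := !![W₁, 0; 0, W₁⁻¹] with hν₁
  set ν₁' : Matrix (Fin 2) (Fin 2) ℝ := !![W₁⁻¹, 0; 0, W₁] with hν₁'
  set ν₂ : Matrix (Fin 2) (Fin 2) ℝ := !![W₂, 0; 0, W₂⁻¹] with hν₂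
  set ν₂' : Matrix (Fin 2) (Fin 2) ℝ := !![W₂⁻¹, 0; 0, W₂] with hν₂'
  have hcmτ₁ : cm τ₁ = !![(1 : ℝ), (b₁ : ℝ); ((p * u : ℕ) : ℝ), ((sbar₁ * ((q * v : ℕ) : ℤ) : ℤ) : ℝ)] := by
    rw [hcm, hτ₁]; ext i j; fin_cases i <;> fin_cases j <;> simp
  have hσ₁' : σ₁ = cm τ₁ * ν₁ := by rw [hσ₁, hcmτ₁]
  have hcmτ₂ : cm τ₂ = !![(1 : ℝ), (b₂ : ℝ); ((p * v : ℕ) : ℝ), ((sbar₂ * ((q * u : ℕ) : ℤ) : ℤ) : ℝ)] := by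
    rw [hcm, hτ₂]; ext i j; fin_cases i <;> fin_cases j <;> simp
  have hσ₂' : σ₂ = cm τ₂ * ν₂ := by rw [hσ₂, hcmτ₂]
  have hν₁ν₁' : ν₁ * ν₁' = 1 := by
    rw [hν₁, hν₁', Matrix.mul_fin_two, Matrix.one_fin_two]
    ext i j
    fin_cases i <;> fin_cases j <;> simp [mul_inv_cancel₀ hW₁pos.ne', inv_mul_cancel₀ hW₁pos.ne']
  have hν₁'ν₁ : ν₁' * ν₁ = 1 := by
    rw [hν₁, hν₁', Matrix.mul_fin_two, Matrix.one_fin_two]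
    ext i j
    fin_cases i <;> fin_cases j <;> simp [mul_inv_cancel₀ hW₁pos.ne', inv_mul_cancel₀ hW₁pos.ne']
  have hν₂ν₂' : ν₂ * ν₂' = 1 := by
    rw [hν₂, hν₂', Matrix.mul_fin_two, Matrix.one_fin_two]
    ext i j
    fin_cases i <;> fin_cases j <;> simp [mul_inv_cancel₀ hW₂pos.ne', inv_mul_cancel₀ hW₂pos.ne']
  have hν₂'ν₂ : ν₂' * ν₂ = 1 := by
    rw [hν₂, hν₂', Matrix.mul_fin_two, Matrix.one_fin_two]
    ext i j
    fin_cases i <;> fin_cases j <;> simp [mul_inv_cancel₀ hW₂pos.ne', inv_mul_cancel₀ hW₂pos.ne']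
  have hσ₁inv : σ₁⁻¹ = ν₁' * cm τ₁' := by
    apply Matrix.inv_eq_left_inv
    rw [hσ₁']
    calc ν₁' * cm τ₁' * (cm τ₁ * ν₁) = ν₁' * (cm τ₁' * cm τ₁) * ν₁ := by
          simp only [Matrix.mul_assoc]
      _ = 1 := by rw [← cm_mul, hτ₁'τ₁, cm_one, Matrix.mul_one, hν₁'ν₁]
  have hσ₂inv : σ₂⁻¹ = ν₂' * cm τ₂' := by
    apply Matrix.inv_eq_left_inv
    rw [hσ₂']
    calc ν₂' * cm τ₂' * (cm τ₂ * ν₂) = ν₂' * (cm τ₂' * cm τ₂) * ν₂ := by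
          simp only [Matrix.mul_assoc]
      _ = 1 := by rw [← cm_mul, hτ₂'τ₂, cm_one, Matrix.mul_one, hν₂'ν₂]
  have hu0 : (u:ℝ) ≠ 0 := Nat.cast_ne_zero.2 hu.ne'
  have hv0 : (v:ℝ) ≠ 0 := Nat.cast_ne_zero.2 hv.ne'
  have hq0 : (q:ℝ) ≠ 0 := Nat.cast_ne_zero.2 hq.ne'
  have hNu : ∀ hh : Matrix (Fin 2) (Fin 2) ℤ, ν₁' * cm hh * ν₂ =
      !![((hh 0 0 : ℤ) : ℝ) * W / v, ((hh 0 1 : ℤ) : ℝ) / ((q:ℝ)*W);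
         ((hh 1 0 : ℤ) : ℝ) * ((q:ℝ)*W), ((hh 1 1 : ℤ) : ℝ) * W / u] := by
    intro hh
    have hcmh : cm hh = !![((hh 0 0 : ℤ) : ℝ), ((hh 0 1 : ℤ) : ℝ); ((hh 1 0 : ℤ) : ℝ), ((hh 1 1 : ℤ) : ℝ)] := by
      rw [hcm]; ext i j; fin_cases i <;> fin_cases j <;> simp [Matrix.map_apply]
    rw [hcmh, hν₁', hν₂, Matrix.mul_fin_two, Matrix.mul_fin_two]
    ext i j
    fin_cases i <;> fin_cases j <;> simp
    · field_simp
      linear_combination (-((hh 0 0 : ℤ) : ℝ)) * hW₁W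
    · rw [eq_div_iff (by positivity : ((q:ℝ)*W) ≠ 0), ← hW₁₂]
      field_simp
    · linear_combination ((hh 1 0 : ℤ) : ℝ) * hW₁₂
    · field_simp
      linear_combination (-((hh 1 1 : ℤ) : ℝ)) * hW₂W
  have hConj : ∀ hh : Matrix (Fin 2) (Fin 2) ℤ, σ₁⁻¹ * cm (τ₁ * hh * τ₂') * σ₂ = ν₁' * cm hh * ν₂ := by
    intro hh
    have key : cm τ₁' * cm (τ₁ * hh * τ₂') * cm τ₂ = cm hh := by
      rw [← cm_mul, ← cm_mul]
      congr 1
      rw [show τ₁' * (τ₁ * hh * τ₂') * τ₂ = (τ₁' * τ₁) * hh * (τ₂' * τ₂) by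
        simp only [Matrix.mul_assoc], hτ₁'τ₁, hτ₂'τ₂, Matrix.one_mul, Matrix.mul_one]
    rw [hσ₁inv, hσ₂']
    calc ν₁' * cm τ₁' * cm (τ₁ * hh * τ₂') * (cm τ₂ * ν₂)
        = ν₁' * (cm τ₁' * cm (τ₁ * hh * τ₂') * cm τ₂) * ν₂ := by simp only [Matrix.mul_assoc]
      _ = ν₁' * cm hh * ν₂ := by rw [key]
  have hτident : ∀ g : Matrix (Fin 2) (Fin 2) ℤ, τ₁ * (τ₁' * g * τ₂) * τ₂' = g := by
    intro g
    rw [show τ₁ * (τ₁' * g * τ₂) * τ₂' = (τ₁ * τ₁') * g * (τ₂ * τ₂') by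
      simp only [Matrix.mul_assoc], hτ₁τ₁', hτ₂τ₂', Matrix.one_mul, Matrix.mul_one]
  have hσσ : σ₁ * σ₁⁻¹ = 1 := by
    rw [hσ₁inv, hσ₁']
    calc cm τ₁ * ν₁ * (ν₁' * cm τ₁') = cm τ₁ * (ν₁ * ν₁') * cm τ₁' := by
          simp only [Matrix.mul_assoc]
      _ = 1 := by rw [hν₁ν₁', Matrix.mul_one, ← cm_mul, hτ₁τ₁', cm_one]
  have hσσ₂ : σ₂ * σ₂⁻¹ = 1 := by
    rw [hσ₂inv, hσ₂']
    calc cm τ₂ * ν₂ * (ν₂' * cm τ₂') = cm τ₂ * (ν₂ * ν₂') * cm τ₂' := by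
          simp only [Matrix.mul_assoc]
      _ = 1 := by rw [hν₂ν₂', Matrix.mul_one, ← cm_mul, hτ₂τ₂', cm_one]
  have hσMσ : ∀ X : Matrix (Fin 2) (Fin 2) ℝ, σ₁ * (σ₁⁻¹ * X * σ₂) * σ₂⁻¹ = X := by
    intro X
    calc σ₁ * (σ₁⁻¹ * X * σ₂) * σ₂⁻¹ = (σ₁ * σ₁⁻¹) * X * (σ₂ * σ₂⁻¹) := by
          simp only [Matrix.mul_assoc]
      _ = X := by rw [hσσ, hσσ₂, Matrix.one_mul, Matrix.mul_one]
  constructor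
  · rintro M hM
    rw [hD] at hM
    obtain ⟨⟨g, hgdet, hgdvd, rfl⟩, -⟩ := hM
    exact ⟨g, hgdet, hgdvd, hσMσ (cm g)⟩
  · -- main sum computation
    haveI : NeZero c := ⟨hc.ne'⟩
    have hqc : q ∣ c := dvd_trans (dvd_mul_left q p) hpqc
    obtain ⟨cq, hcq⟩ := hqc
    obtain ⟨cpq, hcpq⟩ := hpqc
    have hcqp : cq = p * cpq := by
      refine Nat.eq_of_mul_eq_mul_left hq ?_
      rw [← hcq, hcpq]; ring
    have hc0 : (c:ℝ) ≠ 0 := Nat.cast_ne_zero.2 hc.ne'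
    have hcZ : (0:ℤ) < (c:ℤ) := by exact_mod_cast hc
    have hcqZ : (c:ℤ) = (q:ℤ) * (cq:ℤ) := by exact_mod_cast hcq
    have hcqpZ : (cq:ℤ) = (p:ℤ) * (cpq:ℤ) := by exact_mod_cast hcqp
    -- index set and parameter functions
    set A := (Finset.range c).filter (fun a => Nat.gcd a c = 1) with hA
    set IA : ℕ → ℤ := fun a => ((a:ℤ) * t) % (c:ℤ) with hIA
    set ID : ℕ → ℤ := fun a => ((((a:ℕ) : ZMod c)⁻¹).val : ℤ) with hID
    set IK : ℕ → ℤ := fun a => ((u:ℤ)*(v:ℤ)*(IA a)*(ID a) - 1) / (c:ℤ) with hIK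
    set J : ℕ → ℤ := fun a => ((a:ℤ) * t) / (c:ℤ) with hJ
    set HM : ℕ → Matrix (Fin 2) (Fin 2) ℤ :=
      fun a => !![(v:ℤ) * IA a, (q:ℤ) * IK a; (cq:ℤ), (u:ℤ) * ID a] with hHM
    set Φ : ℕ → Matrix (Fin 2) (Fin 2) ℝ :=
      fun a => !![(IA a : ℝ) * W, (IK a : ℝ) / W; (c:ℝ)*W, (ID a : ℝ)*W] with hΦ
    have hIA_nonneg : ∀ a : ℕ, 0 ≤ IA a := fun a => Int.emod_nonneg _ hcZ.ne'
    have hIA_lt : ∀ a : ℕ, IA a < c := fun a => Int.emod_lt_of_pos _ hcZ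
    have hID_nonneg : ∀ a : ℕ, 0 ≤ ID a := fun a => Int.natCast_nonneg _
    have hID_lt : ∀ a : ℕ, ID a < c := by
      intro a
      show ((((a:ℕ) : ZMod c)⁻¹).val : ℤ) < (c:ℤ)
      exact_mod_cast ZMod.val_lt _
    have hIAmod : ∀ a : ℕ, IA a ≡ (a:ℤ) * t [ZMOD (c:ℤ)] := by
      intro a; exact Int.emod_emod_of_dvd _ dvd_rfl
    have hJdef : ∀ a : ℕ, IA a = (a:ℤ) * t - (c:ℤ) * J a := by
      intro a; rw [hIA, hJ]; exact Int.emod_def _ _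
    have htuv : t * ((u:ℤ)*(v:ℤ)) ≡ 1 [ZMOD (c:ℤ)] := by
      have h := ht; push_cast at h ⊢; exact h
    obtain ⟨w, hw⟩ : (c:ℤ) ∣ (t * ((u:ℤ)*(v:ℤ)) - 1) := (dvd_sub_comm).1 htuv.dvd
    have hmod_eq : ∀ x y : ℤ, x ≡ y [ZMOD (c:ℤ)] → 0 ≤ y → y < c → x % (c:ℤ) = y := by
      intro x y hxy h0 hlt
      have h' : x % (c:ℤ) = y % (c:ℤ) := hxy
      rw [h', Int.emod_eq_of_lt h0 hlt]
    have hinv : ∀ a ∈ A, ((a:ℤ) * ID a) ≡ 1 [ZMOD (c:ℤ)] := by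
      intro a ha
      have hcop : Nat.Coprime a c := (Finset.mem_filter.1 ha).2
      have hun : (a : ZMod c) * ((a : ZMod c)⁻¹) = 1 :=
        ZMod.mul_inv_of_unit _ ((ZMod.isUnit_iff_coprime a c).2 hcop)
      have hzc : (((a:ℤ) * ID a : ℤ) : ZMod c) = ((1 : ℤ) : ZMod c) := by
        push_cast
        rw [hID]
        push_cast [ZMod.natCast_val, ZMod.cast_id]
        exact hun
      exact (ZMod.intCast_eq_intCast_iff _ _ _).1 hzc
    have hmain : ∀ a ∈ A, (u:ℤ)*(v:ℤ)*(IA a)*(ID a) ≡ 1 [ZMOD (c:ℤ)] := by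
      intro a ha
      calc (u:ℤ)*(v:ℤ)*(IA a)*(ID a) ≡ (u:ℤ)*(v:ℤ)*((a:ℤ)*t)*(ID a) [ZMOD (c:ℤ)] :=
            (Int.ModEq.mul_right _ (Int.ModEq.mul_left _ (hIAmod a)))
        _ = (t * ((u:ℤ)*(v:ℤ))) * ((a:ℤ) * ID a) := by ring
        _ ≡ 1 * 1 [ZMOD (c:ℤ)] := Int.ModEq.mul htuv (hinv a ha)
        _ = 1 := one_mul 1
    have hIKdef : ∀ a ∈ A, (u:ℤ)*(v:ℤ)*(IA a)*(ID a) - 1 = (c:ℤ) * IK a := by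
      intro a ha
      obtain ⟨k, hk⟩ : (c:ℤ) ∣ ((u:ℤ)*(v:ℤ)*(IA a)*(ID a) - 1) :=
        (dvd_sub_comm).1 (hmain a ha).dvd
      rw [hIK]
      simp only []
      rw [hk, Int.mul_ediv_cancel_left _ (by exact_mod_cast hc.ne' : (c:ℤ) ≠ 0)]
    -- the integer matrix attached to each a
    set gm : ℕ → Matrix (Fin 2) (Fin 2) ℤ := fun a => τ₁ * (HM a * τ₂') with hgm
    have hdetτ₁ : τ₁.det = 1 := by
      rw [hτ₁, Matrix.det_fin_two_of]; linear_combination h₁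
    have hdetτ₂' : τ₂'.det = 1 := by
      rw [hτ₂', Matrix.det_fin_two_of]; linear_combination h₂
    have hdetτ₁' : τ₁'.det = 1 := by
      rw [hτ₁', Matrix.det_fin_two_of]; linear_combination h₁
    have hdetτ₂ : τ₂.det = 1 := by
      rw [hτ₂, Matrix.det_fin_two_of]; linear_combination h₂
    have hdetHM : ∀ a ∈ A, (HM a).det = 1 := by
      intro a ha
      rw [hHM]
      simp only []
      rw [Matrix.det_fin_two_of]
      linear_combination (hIKdef a ha) + (IK a) * hcqZ
    have hdetgm : ∀ a ∈ A, (gm a).det = 1 := by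
      intro a ha
      rw [hgm]
      simp only []
      rw [Matrix.det_mul, Matrix.det_mul, hdetτ₁, hdetτ₂', hdetHM a ha]; ring
    have hg11e : ∀ a : ℕ, gm a 1 1 =
        ((p*u:ℕ):ℤ)*((v:ℤ)*IA a*(-b₂) + (q:ℤ)*IK a)
          + sbar₁*((q*v:ℕ):ℤ)*((cq:ℤ)*(-b₂) + (u:ℤ)*ID a) := by
      intro a
      rw [hgm, hHM]
      simp only []
      rw [hτ₁, hτ₂', Matrix.mul_fin_two, Matrix.mul_fin_two]
      simp
      try ring
    have hg10e : ∀ a : ℕ, gm a 1 0 =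
        ((p*u:ℕ):ℤ)*((v:ℤ)*IA a*(sbar₂*((q*u:ℕ):ℤ)) + (q:ℤ)*IK a * (-((p*v:ℕ):ℤ)))
          + sbar₁*((q*v:ℕ):ℤ)*((cq:ℤ)*(sbar₂*((q*u:ℕ):ℤ)) + (u:ℤ)*ID a*(-((p*v:ℕ):ℤ))) := by
      intro a
      rw [hgm, hHM]
      simp only []
      rw [hτ₁, hτ₂', Matrix.mul_fin_two, Matrix.mul_fin_two]
      simp
      try ring
    have hdvd10 : ∀ a : ℕ, ((p * q * u * v : ℕ) : ℤ) ∣ gm a 1 0 := by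
      intro a
      refine ⟨(u:ℤ)*IA a*sbar₂ - (p:ℤ)*IK a + sbar₁*sbar₂*(cpq:ℤ)*(q:ℤ) - sbar₁*(ID a)*(v:ℤ), ?_⟩
      rw [hg10e a]
      push_cast [hcqp]
      ring
    -- Φ a in terms of HM a
    have hΦΨ : ∀ a : ℕ, ν₁' * cm (HM a) * ν₂ = Φ a := by
      intro a
      have hcqR : (c:ℝ) = (q:ℝ) * (cq:ℝ) := by exact_mod_cast hcq
      rw [hNu (HM a), hHM, hΦ]
      simp only []
      ext i j
      fin_cases i <;> fin_cases j
      all_goals simp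
      all_goals try field_simp
      all_goals try ring
      all_goals linear_combination (-1) * hcqR
    have hΦeq : ∀ a : ℕ, Φ a = σ₁⁻¹ * cm (gm a) * σ₂ := by
      intro a
      rw [← hΦΨ a, ← hConj (HM a)]
      rw [hgm]
      simp only [Matrix.mul_assoc]
    have hΦmem : ∀ a ∈ A, Φ a ∈ D := by
      intro a ha
      rw [hD]
      have haA := Finset.mem_filter.1 ha
      refine ⟨⟨gm a, hdetgm a ha, hdvd10 a, hΦeq a⟩, ?_, ?_, ?_⟩
      · rw [hΦ]; simp only []
        rw [hγ₀]
        rfl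
      · rw [hΦ]; simp only []
        have h00 : (!![(IA a : ℝ) * W, (IK a : ℝ) / W; (c:ℝ)*W, (ID a : ℝ)*W]) 0 0
            = (IA a : ℝ) * W := rfl
        rw [h00, hγ₀]
        constructor
        · have : (0:ℝ) ≤ (IA a : ℝ) := by exact_mod_cast hIA_nonneg a
          positivity
        · refine mul_lt_mul_of_pos_right ?_ hWpos
          exact_mod_cast hIA_lt a
      · rw [hΦ]; simp only []
        have h11 : (!![(IA a : ℝ) * W, (IK a : ℝ) / W; (c:ℝ)*W, (ID a : ℝ)*W]) 1 1
            = (ID a : ℝ) * W := rfl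
        rw [h11, hγ₀]
        constructor
        · have : (0:ℝ) ≤ (ID a : ℝ) := by exact_mod_cast hID_nonneg a
          positivity
        · refine mul_lt_mul_of_pos_right ?_ hWpos
          exact_mod_cast hID_lt a
    -- coprimality toolkit
    have icop : ∀ {x y : ℕ}, Nat.Coprime x y → IsCoprime (x:ℤ) (y:ℤ) :=
      fun h => Nat.isCoprime_iff_coprime.2 h
    have cop_v_sbar₂ : IsCoprime ((v:ℕ):ℤ) sbar₂ :=
      ⟨-(p:ℤ)*b₂, (q:ℤ)*(u:ℤ), by push_cast at h₂ ⊢; linear_combination h₂⟩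
    have cop_u_S1 : IsCoprime ((u:ℕ):ℤ) (sbar₁*((q:ℤ)*(v:ℤ))) :=
      ⟨-(p:ℤ)*b₁, 1, by push_cast at h₁ ⊢; linear_combination h₁⟩
    -- injectivity of the parametrisation
    have hIA_inj : ∀ a ∈ A, ∀ b ∈ A, IA a = IA b → a = b := by
      intro a ha b hb hab
      have h1 : (a:ℤ) ≡ (b:ℤ) [ZMOD (c:ℤ)] := by
        calc (a:ℤ) = (a:ℤ) * 1 := (mul_one _).symm
          _ ≡ (a:ℤ) * (t * ((u:ℤ)*(v:ℤ))) [ZMOD (c:ℤ)] := Int.ModEq.mul_left _ htuv.symm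
          _ = ((a:ℤ) * t) * ((u:ℤ)*(v:ℤ)) := by ring
          _ ≡ IA a * ((u:ℤ)*(v:ℤ)) [ZMOD (c:ℤ)] := Int.ModEq.mul_right _ (hIAmod a).symm
          _ = IA b * ((u:ℤ)*(v:ℤ)) := by rw [hab]
          _ ≡ ((b:ℤ) * t) * ((u:ℤ)*(v:ℤ)) [ZMOD (c:ℤ)] := Int.ModEq.mul_right _ (hIAmod b)
          _ = (b:ℤ) * (t * ((u:ℤ)*(v:ℤ))) := by ring
          _ ≡ (b:ℤ) * 1 [ZMOD (c:ℤ)] := Int.ModEq.mul_left _ htuv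
          _ = (b:ℤ) := mul_one _
      have ha' : a < c := Finset.mem_range.1 (Finset.mem_filter.1 ha).1
      have hb' : b < c := Finset.mem_range.1 (Finset.mem_filter.1 hb).1
      have h2 := hmod_eq _ _ h1 (Int.natCast_nonneg b) (by exact_mod_cast hb')
      rw [Int.emod_eq_of_lt (Int.natCast_nonneg a) (by exact_mod_cast ha')] at h2
      exact_mod_cast h2
    have hInj : Set.InjOn Φ ↑A := by
      intro a ha b hb hab
      have h00 : (IA a : ℝ) * W = (IA b : ℝ) * W := by
        have h := congrFun (congrFun hab 0) 0
        rw [hΦ] at h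
        exact h
      have h01 : IA a = IA b := by exact_mod_cast mul_right_cancel₀ hWpos.ne' h00
      exact hIA_inj a (Finset.mem_coe.1 ha) b (Finset.mem_coe.1 hb) h01
    -- D is exactly the image of A
    have hDsub : D ⊆ Φ '' ↑A := by
      intro M hM
      rw [hD] at hM
      obtain ⟨⟨g, hgdet, hgdvd, hMeq⟩, hM10, hM00, hM11⟩ := hM
      set hm : Matrix (Fin 2) (Fin 2) ℤ := τ₁' * g * τ₂ with hhm
      have hgrec : τ₁ * (hm * τ₂') = g := by
        rw [hhm]
        calc τ₁ * (τ₁' * g * τ₂ * τ₂') = τ₁ * (τ₁' * g * τ₂) * τ₂' := by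
              simp only [Matrix.mul_assoc]
          _ = g := hτident g
      have hMΨ : M = ν₁' * cm hm * ν₂ := by
        rw [hMeq, ← hgrec,
          show τ₁ * (hm * τ₂') = τ₁ * hm * τ₂' from (Matrix.mul_assoc _ _ _).symm]
        exact hConj hm
      have hMf : M = !![(hm 0 0 : ℝ) * W / v, (hm 0 1 : ℝ) / ((q:ℝ)*W);
          (hm 1 0 : ℝ) * ((q:ℝ)*W), (hm 1 1 : ℝ) * W / u] := by rw [hMΨ, hNu hm]
      -- identify the lower-left entry
      have h10 : hm 1 0 = (cq:ℤ) := by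
        have e : (hm 1 0 : ℝ) * ((q:ℝ)*W) = (c:ℝ) * W := by
          rw [hMf] at hM10
          rw [hγ₀] at hM10
          exact hM10
        have e2 : ((hm 1 0 : ℝ) * (q:ℝ)) * W = (c:ℝ) * W := by linear_combination e
        have e3 : (hm 1 0 : ℝ) * (q:ℝ) = (c:ℝ) := mul_right_cancel₀ hWpos.ne' e2
        have e4 : (hm 1 0) * (q:ℤ) = (c:ℤ) := by exact_mod_cast e3
        have e5 : (hm 1 0) * (q:ℤ) = (cq:ℤ) * (q:ℤ) := by rw [e4, hcqZ]; ring
        exact mul_right_cancel₀ (by exact_mod_cast hq.ne' : (q:ℤ) ≠ 0) e5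
      -- range information
      rw [hMf, hγ₀] at hM00 hM11
      obtain ⟨hM00l, hM00r⟩ := hM00
      obtain ⟨hM11l, hM11r⟩ := hM11
      have hα0 : (0:ℤ) ≤ hm 0 0 := by
        by_contra hneg
        push_neg at hneg
        have hx : ((hm 0 0 : ℤ):ℝ) < 0 := by exact_mod_cast hneg
        have : (hm 0 0 : ℝ) * W / v < 0 :=
          div_neg_of_neg_of_pos (mul_neg_of_neg_of_pos hx hWpos) (by positivity)
        have h00l : (0:ℝ) ≤ (hm 0 0 : ℝ) * W / (v:ℝ) := hM00l
        linarith
      have hαlt : hm 0 0 < (c:ℤ)*(v:ℤ) := by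
        have h00r : (hm 0 0 : ℝ) * W / (v:ℝ) < (c:ℝ) * W := hM00r
        rw [div_lt_iff₀ (by positivity : (0:ℝ) < (v:ℝ))] at h00r
        have : (hm 0 0 : ℝ) * W < ((c:ℝ)*(v:ℝ)) * W := by linarith [h00r]
        have := (mul_lt_mul_iff_of_pos_right hWpos).1 this
        exact_mod_cast this
      have hδ0 : (0:ℤ) ≤ hm 1 1 := by
        by_contra hneg
        push_neg at hneg
        have hx : ((hm 1 1 : ℤ):ℝ) < 0 := by exact_mod_cast hneg
        have : (hm 1 1 : ℝ) * W / u < 0 :=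
          div_neg_of_neg_of_pos (mul_neg_of_neg_of_pos hx hWpos) (by positivity)
        have h11l : (0:ℝ) ≤ (hm 1 1 : ℝ) * W / (u:ℝ) := hM11l
        linarith
      have hδlt : hm 1 1 < (c:ℤ)*(u:ℤ) := by
        have h11r : (hm 1 1 : ℝ) * W / (u:ℝ) < (c:ℝ) * W := hM11r
        rw [div_lt_iff₀ (by positivity : (0:ℝ) < (u:ℝ))] at h11r
        have : (hm 1 1 : ℝ) * W < ((c:ℝ)*(u:ℝ)) * W := by linarith [h11r]
        have := (mul_lt_mul_iff_of_pos_right hWpos).1 this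
        exact_mod_cast this
      -- expression of g 1 0
      have hg10g : g 1 0 =
          ((p*u:ℕ):ℤ)*((hm 0 0)*(sbar₂*((q*u:ℕ):ℤ)) + (hm 0 1)*(-((p*v:ℕ):ℤ)))
          + sbar₁*((q*v:ℕ):ℤ)*((cq:ℤ)*(sbar₂*((q*u:ℕ):ℤ)) + (hm 1 1)*(-((p*v:ℕ):ℤ))) := by
        conv_lhs => rw [← hgrec]
        rw [show hm * τ₂' = !![hm 0 0, hm 0 1; (cq:ℤ), hm 1 1] * τ₂' by
          rw [← h10, ← Matrix.eta_fin_two hm]]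
        rw [hτ₁, hτ₂', Matrix.mul_fin_two, Matrix.mul_fin_two]
        simp
        try ring
      -- divisibility of the entries
      have hdvd_v : ((v:ℕ):ℤ) ∣ g 1 0 :=
        dvd_trans (by exact_mod_cast (⟨p*q*u, by ring⟩ : v ∣ p*q*u*v)) hgdvd
      have hdvd_q : ((q:ℕ):ℤ) ∣ g 1 0 :=
        dvd_trans (by exact_mod_cast (⟨p*u*v, by ring⟩ : q ∣ p*q*u*v)) hgdvd
      have hdvd_u : ((u:ℕ):ℤ) ∣ g 1 0 :=
        dvd_trans (by exact_mod_cast (⟨p*q*v, by ring⟩ : u ∣ p*q*u*v)) hgdvd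
      have hdv : ((v:ℕ):ℤ) ∣ hm 0 0 := by
        have h2 : ((v:ℕ):ℤ) ∣ (hm 0 0) * ((p:ℤ)*((u:ℤ)*(sbar₂*((q:ℤ)*(u:ℤ))))) := by
          have hsub := dvd_sub hdvd_v
            (⟨-((p:ℤ)*(u:ℤ)*(hm 0 1)*(p:ℤ)) + sbar₁*(q:ℤ)*(cq:ℤ)*sbar₂*(q:ℤ)*(u:ℤ)
              - sbar₁*(q:ℤ)*(hm 1 1)*(p:ℤ)*(v:ℤ), rfl⟩ :
              ((v:ℕ):ℤ) ∣ (v:ℤ) * (-((p:ℤ)*(u:ℤ)*(hm 0 1)*(p:ℤ))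
                + sbar₁*(q:ℤ)*(cq:ℤ)*sbar₂*(q:ℤ)*(u:ℤ)
                - sbar₁*(q:ℤ)*(hm 1 1)*(p:ℤ)*(v:ℤ)))
          have heq : g 1 0 - (v:ℤ) * (-((p:ℤ)*(u:ℤ)*(hm 0 1)*(p:ℤ))
              + sbar₁*(q:ℤ)*(cq:ℤ)*sbar₂*(q:ℤ)*(u:ℤ)
              - sbar₁*(q:ℤ)*(hm 1 1)*(p:ℤ)*(v:ℤ))
              = (hm 0 0) * ((p:ℤ)*((u:ℤ)*(sbar₂*((q:ℤ)*(u:ℤ))))) := by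
            rw [hg10g]; push_cast; ring
          rwa [heq] at hsub
        exact ((icop hpv.symm).mul_right ((icop huv.symm).mul_right
          (cop_v_sbar₂.mul_right ((icop hqv.symm).mul_right (icop huv.symm))))).dvd_of_dvd_mul_right h2
      have hdq : ((q:ℕ):ℤ) ∣ hm 0 1 := by
        have h2 : ((q:ℕ):ℤ) ∣ (hm 0 1) * ((p:ℤ)*((u:ℤ)*((p:ℤ)*(v:ℤ)))) := by
          have hsub := dvd_sub
            (⟨(p:ℤ)*(u:ℤ)*(hm 0 0)*sbar₂*(u:ℤ) + sbar₁*(v:ℤ)*(cq:ℤ)*sbar₂*(q:ℤ)*(u:ℤ)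
              - sbar₁*(v:ℤ)*(hm 1 1)*(p:ℤ)*(v:ℤ), rfl⟩ :
              ((q:ℕ):ℤ) ∣ (q:ℤ) * ((p:ℤ)*(u:ℤ)*(hm 0 0)*sbar₂*(u:ℤ)
                + sbar₁*(v:ℤ)*(cq:ℤ)*sbar₂*(q:ℤ)*(u:ℤ)
                - sbar₁*(v:ℤ)*(hm 1 1)*(p:ℤ)*(v:ℤ))) hdvd_q
          have heq : (q:ℤ) * ((p:ℤ)*(u:ℤ)*(hm 0 0)*sbar₂*(u:ℤ)
              + sbar₁*(v:ℤ)*(cq:ℤ)*sbar₂*(q:ℤ)*(u:ℤ)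
              - sbar₁*(v:ℤ)*(hm 1 1)*(p:ℤ)*(v:ℤ)) - g 1 0
              = (hm 0 1) * ((p:ℤ)*((u:ℤ)*((p:ℤ)*(v:ℤ)))) := by
            rw [hg10g]; push_cast; ring
          rwa [heq] at hsub
        exact ((icop hpq.symm).mul_right ((icop hqu).mul_right
          ((icop hpq.symm).mul_right (icop hqv)))).dvd_of_dvd_mul_right h2
      have hdu : ((u:ℕ):ℤ) ∣ hm 1 1 := by
        have h2 : ((u:ℕ):ℤ) ∣ (hm 1 1) * ((sbar₁*((q:ℤ)*(v:ℤ)))*((p:ℤ)*(v:ℤ))) := by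
          have hsub := dvd_sub
            (⟨(p:ℤ)*(hm 0 0)*sbar₂*(q:ℤ)*(u:ℤ) - (p:ℤ)*(hm 0 1)*(p:ℤ)*(v:ℤ)
              + sbar₁*(q:ℤ)*(v:ℤ)*(cq:ℤ)*sbar₂*(q:ℤ), rfl⟩ :
              ((u:ℕ):ℤ) ∣ (u:ℤ) * ((p:ℤ)*(hm 0 0)*sbar₂*(q:ℤ)*(u:ℤ)
                - (p:ℤ)*(hm 0 1)*(p:ℤ)*(v:ℤ)
                + sbar₁*(q:ℤ)*(v:ℤ)*(cq:ℤ)*sbar₂*(q:ℤ))) hdvd_u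
          have heq : (u:ℤ) * ((p:ℤ)*(hm 0 0)*sbar₂*(q:ℤ)*(u:ℤ)
              - (p:ℤ)*(hm 0 1)*(p:ℤ)*(v:ℤ)
              + sbar₁*(q:ℤ)*(v:ℤ)*(cq:ℤ)*sbar₂*(q:ℤ)) - g 1 0
              = (hm 1 1) * ((sbar₁*((q:ℤ)*(v:ℤ)))*((p:ℤ)*(v:ℤ))) := by
            rw [hg10g]; push_cast; ring
          rwa [heq] at hsub
        exact (cop_u_S1.mul_right ((icop hpu.symm).mul_right (icop huv))).dvd_of_dvd_mul_right h2
      obtain ⟨α₀, hα₀⟩ := hdv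
      obtain ⟨β₀, hβ₀⟩ := hdq
      obtain ⟨δ₀, hδ₀⟩ := hdu
      -- determinant of hm
      have hdethm : hm 0 0 * hm 1 1 - hm 0 1 * hm 1 0 = 1 := by
        have hd : hm.det = 1 := by
          rw [hhm, Matrix.det_mul, Matrix.det_mul, hdetτ₁', hgdet, hdetτ₂]; ring
        rw [Matrix.det_fin_two] at hd
        exact hd
      have hkey : (u:ℤ)*(v:ℤ)*α₀*δ₀ - 1 = (c:ℤ)*β₀ := by
        rw [hcqZ]
        have := hdethm
        rw [hα₀, hβ₀, hδ₀, h10] at this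
        linear_combination this
      -- bounds on α₀, δ₀
      have hvZ : (0:ℤ) < (v:ℤ) := by exact_mod_cast hv
      have huZ : (0:ℤ) < (u:ℤ) := by exact_mod_cast hu
      have hα₀0 : 0 ≤ α₀ := nonneg_of_mul_nonneg_right (by rw [← hα₀]; exact hα0) hvZ
      have hα₀lt : α₀ < (c:ℤ) := by
        have : (v:ℤ) * α₀ < (v:ℤ) * (c:ℤ) := by
          rw [← hα₀]; calc hm 0 0 < (c:ℤ)*(v:ℤ) := hαlt
            _ = (v:ℤ)*(c:ℤ) := by ring
        exact lt_of_mul_lt_mul_left this hvZ.le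
      have hδ₀0 : 0 ≤ δ₀ := nonneg_of_mul_nonneg_right (by rw [← hδ₀]; exact hδ0) huZ
      have hδ₀lt : δ₀ < (c:ℤ) := by
        have : (u:ℤ) * δ₀ < (u:ℤ) * (c:ℤ) := by
          rw [← hδ₀]; calc hm 1 1 < (c:ℤ)*(u:ℤ) := hδlt
            _ = (u:ℤ)*(c:ℤ) := by ring
        exact lt_of_mul_lt_mul_left this huZ.le
      -- the index a
      set aZ : ℤ := ((u:ℤ)*(v:ℤ)*α₀) % (c:ℤ) with haZdef
      set a : ℕ := aZ.toNat with hadef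
      have haZ0 : 0 ≤ aZ := Int.emod_nonneg _ hcZ.ne'
      have haZc : ((a:ℕ):ℤ) = aZ := Int.toNat_of_nonneg haZ0
      have ha_lt : a < c := by
        have : aZ < (c:ℤ) := Int.emod_lt_of_pos _ hcZ
        omega
      have hamod : ((a:ℕ):ℤ) ≡ (u:ℤ)*(v:ℤ)*α₀ [ZMOD (c:ℤ)] := by
        rw [haZc, haZdef]
        exact Int.emod_emod_of_dvd _ dvd_rfl
      have hadinv : ((a:ℕ):ℤ) * δ₀ ≡ 1 [ZMOD (c:ℤ)] := by
        calc ((a:ℕ):ℤ) * δ₀ ≡ ((u:ℤ)*(v:ℤ)*α₀) * δ₀ [ZMOD (c:ℤ)] :=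
              Int.ModEq.mul_right _ hamod
          _ = (c:ℤ)*β₀ + 1 := by linear_combination hkey
          _ ≡ 1 [ZMOD (c:ℤ)] := Int.modEq_iff_dvd.2 ⟨-β₀, by ring⟩
      have hacop : Nat.Coprime a c := by
        obtain ⟨k', hk'⟩ : (c:ℤ) ∣ (((a:ℕ):ℤ) * δ₀ - 1) := (dvd_sub_comm).1 hadinv.dvd
        have : IsCoprime ((a:ℕ):ℤ) ((c:ℕ):ℤ) := ⟨δ₀, -k', by linear_combination hk'⟩
        exact Nat.isCoprime_iff_coprime.1 this
      have haA : a ∈ A := by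
        rw [hA]
        exact Finset.mem_filter.2 ⟨Finset.mem_range.2 ha_lt, hacop⟩
      -- IA a = α₀
      have hIAa : IA a = α₀ := by
        have hch : ((a:ℕ):ℤ) * t ≡ α₀ [ZMOD (c:ℤ)] := by
          calc ((a:ℕ):ℤ) * t ≡ ((u:ℤ)*(v:ℤ)*α₀) * t [ZMOD (c:ℤ)] :=
                Int.ModEq.mul_right _ hamod
            _ = α₀ * (t * ((u:ℤ)*(v:ℤ))) := by ring
            _ ≡ α₀ * 1 [ZMOD (c:ℤ)] := Int.ModEq.mul_left _ htuv
            _ = α₀ := mul_one _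
        rw [hIA]
        exact hmod_eq _ _ hch hα₀0 hα₀lt
      -- ID a = δ₀
      have hIDa : ID a = δ₀ := by
        have hone : ((a:ℕ) : ZMod c) * ((δ₀ : ℤ) : ZMod c) = 1 := by
          have : ((((a:ℕ):ℤ) * δ₀ : ℤ) : ZMod c) = ((1:ℤ) : ZMod c) :=
            (ZMod.intCast_eq_intCast_iff _ _ _).2 hadinv
          push_cast at this
          exact_mod_cast this
        have hinveq : ((a:ℕ) : ZMod c)⁻¹ = ((δ₀ : ℤ) : ZMod c) :=
          ZMod.inv_eq_of_mul_eq_one _ _ _ hone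
        have hcast : ((δ₀ : ℤ) : ZMod c) = ((δ₀.toNat : ℕ) : ZMod c) := by
          rw [← Int.toNat_of_nonneg hδ₀0]; push_cast; rfl
        have hvlt : δ₀.toNat < c := by omega
        rw [hID]
        simp only []
        rw [hinveq, hcast, ZMod.val_cast_of_lt hvlt]
        omega
      -- IK a = β₀
      have hIKa : IK a = β₀ := by
        have h1 := hIKdef a haA
        rw [hIAa, hIDa] at h1
        have : (c:ℤ) * IK a = (c:ℤ) * β₀ := by rw [← h1, hkey]
        exact mul_left_cancel₀ (by exact_mod_cast hc.ne' : (c:ℤ) ≠ 0) this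
      -- hm = HM a
      have hmeq : hm = HM a := by
        rw [hHM]
        simp only []
        rw [hIAa, hIDa, hIKa]
        rw [Matrix.eta_fin_two hm, h10, hα₀, hβ₀, hδ₀]
      refine ⟨a, Finset.mem_coe.2 haA, ?_⟩
      rw [← hΦΨ a, ← hmeq, hMΨ]
    have hDeq : D = Φ '' ↑A := by
      apply Set.Subset.antisymm hDsub
      rintro _ ⟨a, ha, rfl⟩
      exact hΦmem a (Finset.mem_coe.1 ha)
    -- transport the finsum
    rw [hDeq, finsum_mem_image hInj, finsum_mem_coe_finset, Finset.mul_sum]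
    refine Finset.sum_congr rfl ?_
    intro a haA
    -- floor entry
    have hσΦ : σ₁ * Φ a * σ₂⁻¹ = cm (gm a) := by
      rw [hΦeq a]; exact hσMσ _
    have hfl : ⌊(σ₁ * Φ a * σ₂⁻¹) 1 1⌋ = gm a 1 1 := by
      rw [hσΦ]
      show ⌊((gm a 1 1 : ℤ) : ℝ)⌋ = _
      exact Int.floor_intCast _
    -- the exponential part
    have hE : ((Φ a) 0 0 * (m:ℝ) + (Φ a) 1 1 * (n:ℝ))/γ₀
        = ((((a:ℤ) * t * m + ((((a:ℕ) : ZMod c)⁻¹).val : ℤ) * n : ℤ)):ℝ)/(c:ℝ)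
          + ((-(J a * m) : ℤ):ℝ) := by
      rw [hΦ]
      show ((IA a : ℝ) * W * (m:ℝ) + (ID a : ℝ) * W * (n:ℝ))/γ₀ = _
      rw [hγ₀]
      have hJa : (IA a : ℝ) = (a:ℝ) * (t:ℝ) - (c:ℝ)*(J a : ℝ) := by
        exact_mod_cast congrArg (Int.cast : ℤ → ℝ) (hJdef a)
      have hIDr : (ID a : ℝ) = ((((a:ℕ) : ZMod c)⁻¹).val : ℝ) := by
        rw [hID]; push_cast; rfl
      rw [hJa, hIDr]
      push_cast
      field_simp
      ring
    -- integer congruences for the lower-right entry of gm a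
    have hg11 := hg11e a
    have e1 : ((gm a 1 1 : ℤ) : ZMod p) = (((u:ℤ) * ID a : ℤ) : ZMod p) := by
      refine (ZMod.intCast_eq_intCast_iff _ _ _).2 (Int.modEq_iff_dvd.2 ?_)
      refine ⟨-((u:ℤ)*((v:ℤ)*IA a*(-b₂) + (q:ℤ)*IK a)
        + (u:ℤ)*b₁*(((p:ℤ)*(cpq:ℤ))*(-b₂) + (u:ℤ)*ID a) - (cpq:ℤ)*b₂), ?_⟩
      rw [hg11]
      push_cast [hcqp]
      linear_combination (-(((p:ℤ)*(cpq:ℤ))*(-b₂) + (u:ℤ)*ID a)) * h₁'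
    have e2 : (((v:ℤ) * gm a 1 1 : ℤ) : ZMod q) = (((a:ℕ):ℤ) : ZMod q) := by
      refine (ZMod.intCast_eq_intCast_iff _ _ _).2 (Int.modEq_iff_dvd.2 ?_)
      refine ⟨-((a:ℤ)*(cq:ℤ)*w - (u:ℤ)*(v:ℤ)*(cq:ℤ)*(J a)
        - (u:ℤ)*(u:ℤ)*(v:ℤ)*(IA a)*sbar₂ + (p:ℤ)*(u:ℤ)*(v:ℤ)*(IK a)
        + sbar₁*(v:ℤ)*(v:ℤ)*((cq:ℤ)*(-b₂) + (u:ℤ)*ID a)), ?_⟩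
      rw [hg11]
      push_cast
      linear_combination (-(u:ℤ)*(v:ℤ)*(IA a)) * h₂' - (a:ℤ) * hw
        - ((u:ℤ)*(v:ℤ)) * (hJdef a) - ((a:ℤ)*w - (u:ℤ)*(v:ℤ)*(J a)) * hcqZ
    have e3 : (((p:ℤ)*(q:ℤ)*(v:ℤ) * gm a 1 1 : ℤ) : ZMod u) = (((c:ℕ):ℤ) : ZMod u) := by
      refine (ZMod.intCast_eq_intCast_iff _ _ _).2 (Int.modEq_iff_dvd.2 ?_)
      refine ⟨-((p:ℤ)*(p:ℤ)*(q:ℤ)*(v:ℤ)*((v:ℤ)*IA a*(-b₂) + (q:ℤ)*IK a)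
        + (p:ℤ)*(p:ℤ)*(q:ℤ)*(v:ℤ)*b₁*((cq:ℤ)*(-b₂) + (u:ℤ)*ID a)
        - (c:ℤ)*sbar₂*(q:ℤ) + (p:ℤ)*(q:ℤ)*(v:ℤ)*ID a), ?_⟩
      rw [hg11]
      push_cast
      linear_combination (-((p:ℤ)*(q:ℤ)*(v:ℤ)*((cq:ℤ)*(-b₂) + (u:ℤ)*ID a))) * h₁'
        - ((p:ℤ)*(v:ℤ)*b₂) * hcqZ - (c:ℤ) * h₂'
    have e4 : (((c:ℤ) * gm a 1 1 : ℤ) : ZMod v) = ((-((p:ℤ)*(q:ℤ)*(u:ℤ)) : ℤ) : ZMod v) := by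
      refine (ZMod.intCast_eq_intCast_iff _ _ _).2 (Int.modEq_iff_dvd.2 ?_)
      refine ⟨-(-(c:ℤ)*(p:ℤ)*(u:ℤ)*(IA a)*b₂ + (p:ℤ)*(u:ℤ)*(q:ℤ)*(u:ℤ)*(IA a)*(ID a)
        + (c:ℤ)*sbar₁*(q:ℤ)*((cq:ℤ)*(-b₂) + (u:ℤ)*ID a)), ?_⟩
      rw [hg11]
      push_cast
      linear_combination ((p:ℤ)*(u:ℤ)*(q:ℤ)) * (hIKdef a haA)
    -- character value manipulations
    have He1 : χp ((gm a 1 1 : ℤ) : ZMod p)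
        = χp ((u:ℕ) : ZMod p) * χp (((((a:ℕ) : ZMod c)⁻¹).val : ℕ) : ZMod p) := by
      have h' : ((gm a 1 1 : ℤ) : ZMod p)
          = ((u:ℕ) : ZMod p) * (((((a:ℕ) : ZMod c)⁻¹).val : ℕ) : ZMod p) := by
        rw [e1, hID]; push_cast; ring
      rw [h', _root_.map_mul]
    have He2 : χq ((v:ℕ) : ZMod q) * χq ((gm a 1 1 : ℤ) : ZMod q)
        = χq ((a:ℕ) : ZMod q) := by
      rw [← _root_.map_mul]
      congr 1
      have h' := e2
      push_cast at h' ⊢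
      rw [← h']
    have He3 : χu ((p:ℕ) : ZMod u) * χu ((q:ℕ) : ZMod u) * χu ((v:ℕ) : ZMod u)
        * χu ((gm a 1 1 : ℤ) : ZMod u) = χu ((c:ℕ) : ZMod u) := by
      rw [← _root_.map_mul, ← _root_.map_mul, ← _root_.map_mul]
      congr 1
      have h' := e3
      push_cast at h' ⊢
      linear_combination h'
    have He4 : χv ((c:ℕ) : ZMod v) * χv ((gm a 1 1 : ℤ) : ZMod v)
        = χv (-1) * (χv ((p:ℕ) : ZMod v) * χv ((q:ℕ) : ZMod v) * χv ((u:ℕ) : ZMod v)) := by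
      rw [← _root_.map_mul, ← _root_.map_mul, ← _root_.map_mul, ← _root_.map_mul]
      congr 1
      have h' := e4
      push_cast at h' ⊢
      linear_combination h'
    -- unit norms
    have Pq : χq ((v:ℕ) : ZMod q) * (starRingEnd ℂ) (χq ((v:ℕ) : ZMod q)) = 1 := by
      rw [mul_comm]
      exact char_conj_mul hq.ne' χq _ ((ZMod.isUnit_iff_coprime v q).2 hqv.symm)
    have Pup : χu ((p:ℕ) : ZMod u) * (starRingEnd ℂ) (χu ((p:ℕ) : ZMod u)) = 1 := by
      rw [mul_comm]
      exact char_conj_mul hu.ne' χu _ ((ZMod.isUnit_iff_coprime p u).2 hpu)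
    have Puq : χu ((q:ℕ) : ZMod u) * (starRingEnd ℂ) (χu ((q:ℕ) : ZMod u)) = 1 := by
      rw [mul_comm]
      exact char_conj_mul hu.ne' χu _ ((ZMod.isUnit_iff_coprime q u).2 hqu)
    have Puv : χu ((v:ℕ) : ZMod u) * (starRingEnd ℂ) (χu ((v:ℕ) : ZMod u)) = 1 := by
      rw [mul_comm]
      exact char_conj_mul hu.ne' χu _ ((ZMod.isUnit_iff_coprime v u).2 huv.symm)
    have Pvc : χv ((c:ℕ) : ZMod v) * (starRingEnd ℂ) (χv ((c:ℕ) : ZMod v)) = 1 := by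
      rw [mul_comm]
      exact char_conj_mul hv.ne' χv _
        ((ZMod.isUnit_iff_coprime c v).2 (Nat.Coprime.coprime_dvd_right (dvd_mul_left v u) hcuv))
    have Hreal : (starRingEnd ℂ) (χv (-1)) = χv (-1) := by
      have h2 : χv (-1) * χv (-1) = 1 := by
        rw [← _root_.map_mul]
        norm_num
      rcases mul_self_eq_one_iff.1 h2 with h | h <;> rw [h] <;> simp
    -- solve for the conjugates
    have Fq : (starRingEnd ℂ) (χq ((gm a 1 1 : ℤ) : ZMod q))
        = χq ((v:ℕ) : ZMod q) * (starRingEnd ℂ) (χq ((a:ℕ) : ZMod q)) := by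
      have hcj := congrArg (starRingEnd ℂ) He2
      rw [_root_.map_mul] at hcj
      calc (starRingEnd ℂ) (χq ((gm a 1 1 : ℤ) : ZMod q))
          = (χq ((v:ℕ) : ZMod q) * (starRingEnd ℂ) (χq ((v:ℕ) : ZMod q)))
            * (starRingEnd ℂ) (χq ((gm a 1 1 : ℤ) : ZMod q)) := by rw [Pq, one_mul]
        _ = χq ((v:ℕ) : ZMod q) * ((starRingEnd ℂ) (χq ((v:ℕ) : ZMod q))
            * (starRingEnd ℂ) (χq ((gm a 1 1 : ℤ) : ZMod q))) := by ring
        _ = _ := by rw [hcj]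
    have Fu : (starRingEnd ℂ) (χu ((gm a 1 1 : ℤ) : ZMod u))
        = χu ((p:ℕ) : ZMod u) * χu ((q:ℕ) : ZMod u) * χu ((v:ℕ) : ZMod u)
          * (starRingEnd ℂ) (χu ((c:ℕ) : ZMod u)) := by
      have hcj := congrArg (starRingEnd ℂ) He3
      rw [_root_.map_mul, _root_.map_mul, _root_.map_mul] at hcj
      calc (starRingEnd ℂ) (χu ((gm a 1 1 : ℤ) : ZMod u))
          = (χu ((p:ℕ) : ZMod u) * (starRingEnd ℂ) (χu ((p:ℕ) : ZMod u)))
            * (χu ((q:ℕ) : ZMod u) * (starRingEnd ℂ) (χu ((q:ℕ) : ZMod u)))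
            * (χu ((v:ℕ) : ZMod u) * (starRingEnd ℂ) (χu ((v:ℕ) : ZMod u)))
            * (starRingEnd ℂ) (χu ((gm a 1 1 : ℤ) : ZMod u)) := by
              rw [Pup, Puq, Puv]; ring
        _ = (χu ((p:ℕ) : ZMod u) * χu ((q:ℕ) : ZMod u) * χu ((v:ℕ) : ZMod u))
            * ((starRingEnd ℂ) (χu ((p:ℕ) : ZMod u)) * (starRingEnd ℂ) (χu ((q:ℕ) : ZMod u))
              * (starRingEnd ℂ) (χu ((v:ℕ) : ZMod u))
              * (starRingEnd ℂ) (χu ((gm a 1 1 : ℤ) : ZMod u))) := by ring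
        _ = _ := by rw [hcj]; try ring
    have Fv : (starRingEnd ℂ) (χv ((gm a 1 1 : ℤ) : ZMod v))
        = χv ((c:ℕ) : ZMod v) * ((starRingEnd ℂ) (χv (-1))
          * ((starRingEnd ℂ) (χv ((p:ℕ) : ZMod v)) * (starRingEnd ℂ) (χv ((q:ℕ) : ZMod v))
            * (starRingEnd ℂ) (χv ((u:ℕ) : ZMod v)))) := by
      have hcj := congrArg (starRingEnd ℂ) He4
      rw [_root_.map_mul, _root_.map_mul, _root_.map_mul, _root_.map_mul] at hcj
      calc (starRingEnd ℂ) (χv ((gm a 1 1 : ℤ) : ZMod v))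
          = (χv ((c:ℕ) : ZMod v) * (starRingEnd ℂ) (χv ((c:ℕ) : ZMod v)))
            * (starRingEnd ℂ) (χv ((gm a 1 1 : ℤ) : ZMod v)) := by rw [Pvc, one_mul]
        _ = χv ((c:ℕ) : ZMod v) * ((starRingEnd ℂ) (χv ((c:ℕ) : ZMod v))
            * (starRingEnd ℂ) (χv ((gm a 1 1 : ℤ) : ZMod v))) := by ring
        _ = _ := by rw [hcj]; try ring
    -- the complete character identity
    have Spq_u : χu (((p*q:ℕ)) : ZMod u) = χu ((p:ℕ) : ZMod u) * χu ((q:ℕ) : ZMod u) := by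
      push_cast
      rw [_root_.map_mul]
    have Spq_v : (starRingEnd ℂ) (χv (((p*q:ℕ)) : ZMod v))
        = (starRingEnd ℂ) (χv ((p:ℕ) : ZMod v)) * (starRingEnd ℂ) (χv ((q:ℕ) : ZMod v)) := by
      push_cast
      rw [_root_.map_mul, _root_.map_mul]
    have charid : (starRingEnd ℂ) (χ ((gm a 1 1 : ℤ) : ZMod (p*q*u*v)))
        = frak * (starRingEnd ℂ) (χu ((c:ℕ) : ZMod u)) * χv ((c:ℕ) : ZMod v)
          * ((starRingEnd ℂ) (χp (((((a:ℕ) : ZMod c)⁻¹).val : ℕ) : ZMod p))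
            * (starRingEnd ℂ) (χq ((a:ℕ) : ZMod q))) := by
      rw [hfact (gm a 1 1), _root_.map_mul, _root_.map_mul, _root_.map_mul, He1, _root_.map_mul, Fq, Fu, Fv,
        hfrak, Hreal, Spq_u, Spq_v]
      ring
    rw [hfl, hE, eFun_add, eFun_int, mul_one, charid]
    ring
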